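/- Let $\xi = e^{2\pi i/n}$ and $1 \le k \le n-1$. Then for all $x \in \mathbb{C}$ with $|x| = R$, $\sum_{i=1}^n |x-\xi^i|^{2k} = n \sum_{j=0}^{k} \binom{k}{j}^2 R^{2j}$. -/

import Mathlib

theorem stmt_2 (n : ℕ) (hn : 0 < n) (k : ℕ) (hk1 : 1 ≤ k) (hk2 : k ≤ n - 1)
    (R : ℝ) (hR : 0 < R) (x : ℂ) (hx : ‖x‖ = R) :
    ∑ i ∈ Finset.range n,
        ‖x - Complex.exp (2 * Real.pi * Complex.I / n) ^ (i + 1)‖ ^ (2 * k) =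
    n * ∑ j ∈ Finset.range (k + 1), (Nat.choose k j : ℝ) ^ 2 * R ^ (2 * j) := by
  set ζ : ℂ := Complex.exp (2 * Real.pi * Complex.I / n) with hζdef
  have hprim : IsPrimitiveRoot ζ n := Complex.isPrimitiveRoot_exp n hn.ne'
  have hζn : ζ ^ n = 1 := hprim.pow_eq_one
  have hζ0 : ζ ≠ 0 := hprim.ne_zero hn.ne'
  have habs : ‖ζ‖ = 1 := by
    rw [hζdef, show (2 * (Real.pi : ℂ) * Complex.I / n : ℂ)
        = ((2 * Real.pi / n : ℝ) : ℂ) * Complex.I by push_cast; ring]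
    exact Complex.norm_exp_ofReal_mul_I _
  have hconj : (starRingEnd ℂ) ζ = ζ⁻¹ := (Complex.inv_eq_conj habs).symm
  have key : ∀ m : ℤ, ∑ i ∈ Finset.range n, ζ ^ (((i : ℤ) + 1) * m)
      = if (n : ℤ) ∣ m then (n : ℂ) else 0 := by
    intro m
    by_cases h : (n : ℤ) ∣ m
    · rw [if_pos h, Finset.sum_congr rfl
        (fun i _ => (hprim.zpow_eq_one_iff_dvd _).mpr (h.mul_left _))]
      simp
    · rw [if_neg h]
      set u : ℂ := ζ ^ m with hu
      have hu1 : u ≠ 1 := fun hh => h ((hprim.zpow_eq_one_iff_dvd m).mp hh)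
      have hun : u ^ n = 1 := by
        rw [hu, ← zpow_natCast, ← zpow_mul, mul_comm, zpow_mul, zpow_natCast, hζn, one_zpow]
      have step : ∀ i ∈ Finset.range n, ζ ^ (((i : ℤ) + 1) * m) = u ^ i * u := by
        intro i _
        rw [mul_comm, zpow_mul, ← hu,
          show ((i : ℤ) + 1) = ((i + 1 : ℕ) : ℤ) by push_cast; ring,
          zpow_natCast, pow_succ]
      rw [Finset.sum_congr rfl step, ← Finset.sum_mul, geom_sum_eq hu1, hun, sub_self,
        zero_div, zero_mul]
  set c : ℂ := (starRingEnd ℂ) x with hc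
  have hxc : x * c = (R : ℂ) ^ 2 := by
    rw [hc, Complex.mul_conj, Complex.normSq_eq_norm_sq, hx]; norm_cast
  have expand : ∀ z : ℂ, ((‖z‖ : ℂ)) ^ (2 * k) = (z * (starRingEnd ℂ) z) ^ k := by
    intro z
    rw [← Complex.ofReal_pow, pow_mul, Complex.sq_norm, Complex.ofReal_pow, ← Complex.mul_conj]
  have hconjpow : ∀ i : ℕ, (starRingEnd ℂ) (ζ ^ i) = ζ ^ (-(i : ℤ)) := by
    intro i
    rw [map_pow, hconj, inv_pow, ← zpow_natCast, ← zpow_neg]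
  have term_eq : ∀ i : ℕ, ((x - ζ ^ (i + 1)) * (starRingEnd ℂ) (x - ζ ^ (i + 1))) ^ k
      = ∑ a ∈ Finset.range (k + 1), ∑ b ∈ Finset.range (k + 1),
          (((-1 : ℂ) ^ (a + k) * x ^ a * (k.choose a : ℂ)) *
            ((-1 : ℂ) ^ (b + k) * c ^ b * (k.choose b : ℂ))) *
            ζ ^ (((i : ℤ) + 1) * ((b : ℤ) - (a : ℤ))) := by
    intro i
    have hw : (starRingEnd ℂ) (x - ζ ^ (i + 1)) = c - ζ ^ (-((i : ℤ) + 1)) := by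
      rw [map_sub, hc, hconjpow]
      norm_num
    rw [mul_pow, hw, sub_pow, sub_pow, Finset.sum_mul_sum]
    refine Finset.sum_congr rfl fun a ha => Finset.sum_congr rfl fun b hb => ?_
    rw [Finset.mem_range] at ha hb
    have hak : a ≤ k := Nat.lt_succ_iff.mp ha
    have hbk : b ≤ k := Nat.lt_succ_iff.mp hb
    have e1 : (ζ ^ (i + 1)) ^ (k - a) = ζ ^ (((i : ℤ) + 1) * ((k : ℤ) - a)) := by
      rw [← pow_mul, ← zpow_natCast]
      congr 1
      push_cast [Nat.cast_sub hak]
      ring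
    have e2 : (ζ ^ (-((i : ℤ) + 1))) ^ (k - b) = ζ ^ (-(((i : ℤ) + 1) * ((k : ℤ) - b))) := by
      rw [← zpow_natCast, ← zpow_mul]
      congr 1
      push_cast [Nat.cast_sub hbk]
      ring
    rw [e1, e2]
    rw [show ((i : ℤ) + 1) * ((b : ℤ) - (a : ℤ))
        = (((i : ℤ) + 1) * ((k : ℤ) - a)) + (-(((i : ℤ) + 1) * ((k : ℤ) - b))) by ring,
      zpow_add₀ hζ0]
    ring
  -- reduce to the complex statement
  rw [← Complex.ofReal_inj]
  push_cast
  simp only [expand]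
  rw [Finset.sum_congr rfl fun i _ => term_eq i]
  rw [Finset.sum_comm]
  have swap2 : ∀ a, ∑ i ∈ Finset.range n, ∑ b ∈ Finset.range (k + 1),
      (((-1 : ℂ) ^ (a + k) * x ^ a * (k.choose a : ℂ)) *
        ((-1 : ℂ) ^ (b + k) * c ^ b * (k.choose b : ℂ))) *
        ζ ^ (((i : ℤ) + 1) * ((b : ℤ) - (a : ℤ)))
      = ∑ b ∈ Finset.range (k + 1), ∑ i ∈ Finset.range n,
      (((-1 : ℂ) ^ (a + k) * x ^ a * (k.choose a : ℂ)) *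
        ((-1 : ℂ) ^ (b + k) * c ^ b * (k.choose b : ℂ))) *
        ζ ^ (((i : ℤ) + 1) * ((b : ℤ) - (a : ℤ))) := fun a => Finset.sum_comm
  rw [Finset.sum_congr rfl fun a _ => swap2 a]
  have inner : ∀ a ∈ Finset.range (k + 1), ∀ b ∈ Finset.range (k + 1),
      ∑ i ∈ Finset.range n,
        (((-1 : ℂ) ^ (a + k) * x ^ a * (k.choose a : ℂ)) *
          ((-1 : ℂ) ^ (b + k) * c ^ b * (k.choose b : ℂ))) *
          ζ ^ (((i : ℤ) + 1) * ((b : ℤ) - (a : ℤ)))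
      = if a = b then
          (((-1 : ℂ) ^ (a + k) * x ^ a * (k.choose a : ℂ)) *
            ((-1 : ℂ) ^ (b + k) * c ^ b * (k.choose b : ℂ))) * n
        else 0 := by
    intro a ha b hb
    rw [Finset.mem_range] at ha hb
    rw [← Finset.mul_sum, key]
    have : (n : ℤ) ∣ ((b : ℤ) - (a : ℤ)) ↔ a = b := by
      constructor
      · intro hd
        have hlt : |(b : ℤ) - (a : ℤ)| < n := by
          rw [abs_lt]
          omega
        have := Int.eq_zero_of_abs_lt_dvd hd ?_
        · omega
        · exact hlt
      · intro h; subst h; simp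
    by_cases hab : a = b
    · rw [if_pos (this.mpr hab), if_pos hab]
    · rw [if_neg (fun hd => hab (this.mp hd)), if_neg hab, mul_zero]
  rw [Finset.sum_congr rfl fun a ha => Finset.sum_congr rfl fun b hb => inner a ha b hb]
  have diag : ∀ a ∈ Finset.range (k + 1),
      (∑ b ∈ Finset.range (k + 1), if a = b then
          (((-1 : ℂ) ^ (a + k) * x ^ a * (k.choose a : ℂ)) *
            ((-1 : ℂ) ^ (b + k) * c ^ b * (k.choose b : ℂ))) * n
        else 0)
      = (n : ℂ) * ((k.choose a : ℂ) ^ 2 * (R : ℂ) ^ (2 * a)) := by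
    intro a ha
    rw [Finset.sum_ite_eq, if_pos ha]
    have : x ^ a * c ^ a = (R : ℂ) ^ (2 * a) := by
      rw [← mul_pow, hxc, ← pow_mul]
    calc (((-1 : ℂ) ^ (a + k) * x ^ a * (k.choose a : ℂ)) *
            ((-1 : ℂ) ^ (a + k) * c ^ a * (k.choose a : ℂ))) * n
        = ((-1 : ℂ) ^ (a + k)) ^ 2 * (x ^ a * c ^ a) * (k.choose a : ℂ) ^ 2 * n := by ring
      _ = (n : ℂ) * ((k.choose a : ℂ) ^ 2 * (R : ℂ) ^ (2 * a)) := by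
          rw [← pow_mul, this,
            show ((-1 : ℂ)) ^ ((a + k) * 2) = 1 from Even.neg_one_pow ⟨a + k, by ring⟩]
          ring
  rw [Finset.sum_congr rfl diag, ← Finset.mul_sum]
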